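/- Let k ≥ 1, let N = k², and let M be an N×N matrix over the field 𝔽₂ with all diagonal entries equal to 1. Then the row space of M contains a vector with at least k nonzero entries. -/

import Mathlib

set_option maxHeartbeats 1000000


/-- Let `k ≥ 1`, `N = k²`, and let `M` be an `N × N` matrix over `𝔽₂` with all
diagonal entries equal to 1.  Then the row space of `M` contains a vector with
at least `k` nonzero entries. -/
theorem rowspace_heavy_vector (k : ℕ) (hk : 1 ≤ k)
    (M : Matrix (Fin (k ^ 2)) (Fin (k ^ 2)) (ZMod 2))
    (hdiag : ∀ i, M i i = 1) :
    ∃ v ∈ Submodule.span (ZMod 2) (Set.range fun i => M i),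
      k ≤ (Finset.univ.filter (fun j => v j ≠ 0)).card := by
  classical
  by_contra hcon
  push_neg at hcon
  set S : Submodule (ZMod 2) (Fin (k ^ 2) → (ZMod 2)) := Submodule.span (ZMod 2) (Set.range fun i => M i) with hS
  have hwt : ∀ x : S, (Finset.univ.filter (fun j => (x : Fin (k ^ 2) → (ZMod 2)) j ≠ 0)).card < k :=
    fun x => hcon _ x.2
  set r := Module.finrank (ZMod 2) S with hrdef
  -- basis of S
  let b := Module.finBasis (ZMod 2) S
  -- every column is covered by some basis vector
  have hcover : ∀ j : Fin (k ^ 2), ∃ i, ((b i : Fin (k ^ 2) → (ZMod 2))) j ≠ 0 := by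
    intro j
    by_contra h
    push_neg at h
    have hmem : M j ∈ S := Submodule.subset_span ⟨j, rfl⟩
    have hx := b.sum_repr ⟨M j, hmem⟩
    have hx' := congrArg (fun y : S => (y : Fin (k ^ 2) → (ZMod 2)) j) hx
    simp only [AddSubmonoidClass.coe_finset_sum, Finset.sum_apply, SetLike.val_smul,
      Pi.smul_apply, h, smul_zero, Finset.sum_const_zero] at hx'
    exact zero_ne_one (hx'.trans (hdiag j))
  -- covering bound: k² ≤ r * (k-1), hence k ≤ r
  have hsub : (Finset.univ : Finset (Fin (k ^ 2))) ⊆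
      Finset.univ.biUnion (fun i => Finset.univ.filter (fun j => (b i : Fin (k ^ 2) → (ZMod 2)) j ≠ 0)) := by
    intro j _
    obtain ⟨i, hi⟩ := hcover j
    exact Finset.mem_biUnion.2 ⟨i, Finset.mem_univ i, Finset.mem_filter.2 ⟨Finset.mem_univ j, hi⟩⟩
  have hsum : k ^ 2 ≤ r * (k - 1) := by
    calc k ^ 2 = (Finset.univ : Finset (Fin (k ^ 2))).card := by simp
    _ ≤ (Finset.univ.biUnion (fun i => Finset.univ.filter
          (fun j => (b i : Fin (k ^ 2) → (ZMod 2)) j ≠ 0))).card := Finset.card_le_card hsub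
    _ ≤ ∑ i, (Finset.univ.filter (fun j => (b i : Fin (k ^ 2) → (ZMod 2)) j ≠ 0)).card :=
        Finset.card_biUnion_le
    _ ≤ ∑ _i : Fin r, (k - 1) := Finset.sum_le_sum (fun i _ => Nat.le_sub_one_of_lt (hwt (b i)))
    _ = r * (k - 1) := by simp [Finset.sum_const, Nat.smul_one_eq_cast]
  have hr : k ≤ r := by
    by_contra hlt
    push_neg at hlt
    have : r * (k - 1) ≤ k * (k-1) := Nat.mul_le_mul (le_of_lt hlt) le_rfl
    have h2 : k ^ 2 ≤ k * (k - 1) := le_trans hsum this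
    nlinarith [Nat.sub_le k 1, Nat.sub_add_cancel hk]
  -- dual space argument
  set ℓ : Fin (k ^ 2) → Module.Dual (ZMod 2) S := fun j => S.dualRestrict (LinearMap.proj j) with hℓ
  have hspanℓ : Submodule.span (ZMod 2) (Set.range ℓ) = ⊤ := by
    have h1 : Set.range ℓ = S.dualRestrict ''
        Set.range (fun j : Fin (k ^ 2) => (LinearMap.proj j : Module.Dual (ZMod 2) (Fin (k ^ 2) → (ZMod 2)))) := by
      rw [← Set.range_comp]; rfl
    have h2 : (fun j : Fin (k ^ 2) => (LinearMap.proj j : Module.Dual (ZMod 2) (Fin (k ^ 2) → ZMod 2))) =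
        ⇑(Pi.basisFun (ZMod 2) (Fin (k ^ 2))).dualBasis := by
      funext j
      ext x
      simp [Module.Basis.dualBasis_apply, Pi.basisFun_repr]
    rw [h1, h2, ← Submodule.map_span, Module.Basis.span_eq, Submodule.map_top,
      LinearMap.range_eq_top.2 (Subspace.dualRestrict_surjective (W := S))]
  obtain ⟨t, hts, htspan, htli⟩ := exists_linearIndependent (ZMod 2) (Set.range ℓ)
  rw [hspanℓ] at htspan
  have htfin : t.Finite := by
    have : FiniteDimensional (ZMod 2) (Module.Dual (ZMod 2) S) := inferInstance
    exact htli.setFinite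
  haveI : Fintype t := htfin.fintype
  have hbt : Module.Basis t (ZMod 2) (Module.Dual (ZMod 2) S) :=
    Module.Basis.mk htli (by rw [Subtype.range_coe, htspan])
  have hcardt : Fintype.card t = r := by
    have h := Module.finrank_eq_card_basis hbt
    rw [Subspace.dual_finrank_eq] at h
    exact h.symm
  -- evaluation map
  set L : S →ₗ[ZMod 2] (t → (ZMod 2)) := LinearMap.pi (fun f => (f : Module.Dual (ZMod 2) S)) with hL
  have hinj : Function.Injective L := by
    rw [← LinearMap.ker_eq_bot]
    ext x
    simp only [LinearMap.mem_ker, Submodule.mem_bot]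
    constructor
    · intro hx
      have hall : ∀ φ : Module.Dual (ZMod 2) S, φ x = 0 := by
        intro φ
        have hφ : φ ∈ Submodule.span (ZMod 2) t := by rw [htspan]; exact Submodule.mem_top
        induction hφ using Submodule.span_induction with
        | mem f hf => exact congrFun hx ⟨f, hf⟩
        | zero => simp
        | add f g _ _ hf hg => simp [hf, hg]
        | smul c f _ hf => simp [hf]
      exact (Module.forall_dual_apply_eq_zero_iff (ZMod 2) x).1 hall
    · rintro rfl; simp
  have hfr : Module.finrank (ZMod 2) S = Module.finrank (ZMod 2) (t → (ZMod 2)) := by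
    rw [Module.finrank_pi, hcardt]
  have hsurj := (LinearMap.injective_iff_surjective_of_finrank_eq_finrank hfr).1 hinj
  obtain ⟨x, hx⟩ := hsurj (fun _ => 1)
  -- the representative indices
  have hrep : ∀ f : t, ∃ j : Fin (k ^ 2), ℓ j = (f : Module.Dual (ZMod 2) S) := fun f => hts f.2
  choose jmap hjmap using hrep
  have hjinj : Function.Injective jmap := by
    intro f g hfg
    have : (f : Module.Dual (ZMod 2) S) = g := by rw [← hjmap f, ← hjmap g, hfg]
    exact Subtype.ext this
  have himg : Finset.univ.image jmap ⊆
      Finset.univ.filter (fun j => (x : Fin (k ^ 2) → (ZMod 2)) j ≠ 0) := by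
    intro j hj
    obtain ⟨f, _, rfl⟩ := Finset.mem_image.1 hj
    refine Finset.mem_filter.2 ⟨Finset.mem_univ _, ?_⟩
    have h1 : ℓ (jmap f) x = 1 := by
      rw [hjmap f]
      exact congrFun hx f
    have h2 : ℓ (jmap f) x = (x : Fin (k ^ 2) → (ZMod 2)) (jmap f) := by
      simp [hℓ, Submodule.dualRestrict_apply]
    rw [h2] at h1
    rw [h1]
    exact one_ne_zero
  have hfinal : k ≤ (Finset.univ.filter (fun j => (x : Fin (k ^ 2) → (ZMod 2)) j ≠ 0)).card := by
    calc k ≤ r := hr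
    _ = Fintype.card t := hcardt.symm
    _ = (Finset.univ.image jmap).card := by
        rw [Finset.card_image_of_injective _ hjinj, Finset.card_univ]
    _ ≤ _ := Finset.card_le_card himg
  exact absurd hfinal (not_le.2 (hwt x))
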